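/- Let (p,w) ∈ W and suppose the family ((λ'_s, p'_s, w'_s, a'_s)) indexed by s ∈ S is feasible at (p,w) and attains the supremum defining T(V*)(p,w). Then there exists another family ((λ_s, p_s, w_s, a_s)), feasible at (p,w) and also attaining the supremum defining T(V*)(p,w), in which there is at most one signal s ∈ S with λ_s > 0 and a_s = a*. -/

import Mathlib

set_option linter.unusedSectionVars false
set_option maxHeartbeats 1000000


noncomputable section

/-- Expected payoff of action `a` at belief `p` (= probability of state `ω₁`, encoded `true`). -/
def euP {A : Type*} (u : A → Bool → ℝ) (a : A) (p : ℝ) : ℝ :=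
  (1 - p) * u a false + p * u a true

/-- The agent's best static payoff `m(p)` at belief `p`. -/
def mFun {A : Type*} [Fintype A] [Nonempty A] (u : A → Bool → ℝ) (p : ℝ) : ℝ :=
  Finset.univ.sup' Finset.univ_nonempty (fun a => euP u a p)

/-- The agent's full-information payoff `M(p)` at belief `p`. -/
def MFun {A : Type*} [Fintype A] [Nonempty A] (u : A → Bool → ℝ) (p : ℝ) : ℝ :=
  (1 - p) * Finset.univ.sup' Finset.univ_nonempty (fun a => u a false)
    + p * Finset.univ.sup' Finset.univ_nonempty (fun a => u a true)

/-- The set `W` of pairs (belief, promised utility). -/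
def Wset {A : Type*} [Fintype A] [Nonempty A] (u : A → Bool → ℝ) : Set (ℝ × ℝ) :=
  {pw | pw.1 ∈ Set.Icc (0 : ℝ) 1 ∧ mFun u pw.1 ≤ pw.2 ∧ pw.2 ≤ MFun u pw.1}

/-- A family: for each signal a probability, a posterior belief, a promised continuation
utility, and a recommended action. -/
structure Fam (A S : Type*) where
  prob : S → ℝ
  belief : S → ℝ
  promise : S → ℝ
  act : S → A

/-- Feasibility of the family `f` at the point `pw = (p, w) ∈ W`. -/
def Feasible {A S : Type*} [Fintype A] [Nonempty A] [Fintype S]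
    (u : A → Bool → ℝ) (δ : ℝ) (pw : ℝ × ℝ) (f : Fam A S) : Prop :=
  (∀ s, f.prob s ∈ Set.Icc (0 : ℝ) 1) ∧
  (∀ s, (f.belief s, f.promise s) ∈ Wset u) ∧
  (∀ s, (1 - δ) * euP u (f.act s) (f.belief s) + δ * f.promise s ≥ mFun u (f.belief s)) ∧
  (∑ s, f.prob s * ((1 - δ) * euP u (f.act s) (f.belief s) + δ * f.promise s) ≥ pw.2) ∧
  (∑ s, f.prob s * f.belief s = pw.1) ∧
  (∑ s, f.prob s = 1)

/-- The principal's payoff from the family `f`, given continuation value function `V`. -/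
def famPayoff {A S : Type*} [Fintype S] (v : A → Bool → ℝ) (δ : ℝ) (V : ℝ × ℝ → ℝ)
    (f : Fam A S) : ℝ :=
  ∑ s, f.prob s * ((1 - δ) * euP v (f.act s) (f.belief s) + δ * V (f.belief s, f.promise s))

/-- The Bellman operator `T`. -/
def bellman {A S : Type*} [Fintype A] [Nonempty A] [Fintype S]
    (u v : A → Bool → ℝ) (δ : ℝ) (V : ℝ × ℝ → ℝ) (pw : ℝ × ℝ) : ℝ :=
  sSup {x | ∃ f : Fam A S, Feasible u δ pw f ∧ x = famPayoff v δ V f}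

/-- `V` is bounded on `W`. -/
def BddOnW {A : Type*} [Fintype A] [Nonempty A] (u : A → Bool → ℝ) (V : ℝ × ℝ → ℝ) : Prop :=
  ∃ C : ℝ, ∀ pw ∈ Wset u, |V pw| ≤ C

namespace OFS

variable {A S ι : Type*} [Fintype A] [Nonempty A] [Fintype S] [Fintype ι]

/-- affine combination lemma -/
lemma aff_sum (c d : ℝ) (μ p : ι → ℝ) (h1 : ∑ i, μ i = 1) :
    ∑ i, μ i * ((1 - p i) * c + p i * d)
      = (1 - ∑ i, μ i * p i) * c + (∑ i, μ i * p i) * d := by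
  have key : ∀ i, μ i * ((1 - p i) * c + p i * d) = μ i * c + (μ i * p i) * (d - c) := by
    intro i; ring
  simp only [key, Finset.sum_add_distrib, ← Finset.sum_mul, h1, one_mul]
  ring

lemma euP_sum (u : A → Bool → ℝ) (a : A) (μ p : ι → ℝ) (h1 : ∑ i, μ i = 1) :
    ∑ i, μ i * euP u a (p i) = euP u a (∑ i, μ i * p i) :=
  aff_sum _ _ μ p h1

lemma MFun_sum (u : A → Bool → ℝ) (μ p : ι → ℝ) (h1 : ∑ i, μ i = 1) :
    ∑ i, μ i * MFun u (p i) = MFun u (∑ i, μ i * p i) :=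
  aff_sum _ _ μ p h1

lemma le_mFun (u : A → Bool → ℝ) (a : A) (p : ℝ) : euP u a p ≤ mFun u p := by
  unfold mFun; exact Finset.le_sup' (fun a => euP u a p) (Finset.mem_univ a)

lemma mFun_le (u : A → Bool → ℝ) {p x : ℝ} (h : ∀ a, euP u a p ≤ x) : mFun u p ≤ x := by
  unfold mFun; exact Finset.sup'_le _ _ fun a _ => h a

lemma mFun_jensen (u : A → Bool → ℝ) (μ p : ι → ℝ) (hμ : ∀ i, 0 ≤ μ i)
    (h1 : ∑ i, μ i = 1) :
    mFun u (∑ i, μ i * p i) ≤ ∑ i, μ i * mFun u (p i) := by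
  apply mFun_le
  intro a
  rw [← euP_sum u a μ p h1]
  exact Finset.sum_le_sum fun i _ => mul_le_mul_of_nonneg_left (le_mFun u a (p i)) (hμ i)

lemma W_avg (u : A → Bool → ℝ) (μ : ι → ℝ) (q : ι → ℝ × ℝ) (hμ : ∀ i, 0 ≤ μ i)
    (h1 : ∑ i, μ i = 1) (hq : ∀ i, q i ∈ Wset u) :
    ((∑ i, μ i * (q i).1, ∑ i, μ i * (q i).2) : ℝ × ℝ) ∈ Wset u := by
  refine ⟨⟨?_, ?_⟩, ?_, ?_⟩
  · exact Finset.sum_nonneg fun i _ => mul_nonneg (hμ i) (hq i).1.1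
  · calc ∑ i, μ i * (q i).1 ≤ ∑ i, μ i * 1 :=
          Finset.sum_le_sum fun i _ => mul_le_mul_of_nonneg_left (hq i).1.2 (hμ i)
      _ = 1 := by simpa using h1
  · calc mFun u (∑ i, μ i * (q i).1) ≤ ∑ i, μ i * mFun u ((q i).1) :=
          mFun_jensen u μ _ hμ h1
      _ ≤ ∑ i, μ i * (q i).2 :=
          Finset.sum_le_sum fun i _ => mul_le_mul_of_nonneg_left (hq i).2.1 (hμ i)
  · calc ∑ i, μ i * (q i).2 ≤ ∑ i, μ i * MFun u ((q i).1) :=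
          Finset.sum_le_sum fun i _ => mul_le_mul_of_nonneg_left (hq i).2.2 (hμ i)
      _ = MFun u (∑ i, μ i * (q i).1) := MFun_sum u μ _ h1

lemma exists_argmax (u : A → Bool → ℝ) (p : ℝ) : ∃ a : A, euP u a p = mFun u p := by
  obtain ⟨b, _, hb⟩ := Finset.exists_mem_eq_sup' (Finset.univ_nonempty) (fun a => euP u a p)
  exact ⟨b, hb.symm⟩

lemma mFun_zero (u : A → Bool → ℝ) :
    mFun u 0 = Finset.univ.sup' Finset.univ_nonempty (fun a => u a false) := by
  unfold mFun
  apply Finset.sup'_congr _ rfl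
  intro a _
  simp [euP]

lemma mFun_one (u : A → Bool → ℝ) :
    mFun u 1 = Finset.univ.sup' Finset.univ_nonempty (fun a => u a true) := by
  unfold mFun
  apply Finset.sup'_congr _ rfl
  intro a _
  simp [euP]

lemma MFun_zero (u : A → Bool → ℝ) : MFun u 0 = mFun u 0 := by
  rw [mFun_zero]; unfold MFun; ring

lemma MFun_one (u : A → Bool → ℝ) : MFun u 1 = mFun u 1 := by
  rw [mFun_one]; unfold MFun; ring

lemma base_mem (u : A → Bool → ℝ) : ((0 : ℝ), mFun u 0) ∈ Wset u :=
  ⟨⟨le_refl 0, zero_le_one⟩, le_refl _, (MFun_zero u).ge⟩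

lemma one_mem (u : A → Bool → ℝ) : ((1 : ℝ), mFun u 1) ∈ Wset u :=
  ⟨⟨zero_le_one, le_refl 1⟩, le_refl _, (MFun_one u).ge⟩


lemma sum_elift_eq {F : S → ℝ} (e : A ↪ S) (hF : ∀ s, (¬ ∃ a, e a = s) → F s = 0) :
    ∑ s, F s = ∑ a, F (e a) := by
  rw [← Finset.sum_map Finset.univ e F]
  symm
  apply Finset.sum_subset (Finset.subset_univ _)
  intro x _ hx
  apply hF
  intro hcon
  apply hx
  rw [Finset.mem_map]
  obtain ⟨a, ha⟩ := hcon
  exact ⟨a, Finset.mem_univ a, ha⟩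

def elift (e : A ↪ S) {α : Type*} (f : A → α) (d : α) : S → α :=
  fun s => @dite _ (∃ a, e a = s) (Classical.dec _) (fun hs => f (Classical.choose hs)) (fun _ => d)

lemma elift_apply (e : A ↪ S) {α : Type*} (f : A → α) (d : α) (a : A) :
    elift e f d (e a) = f a := by
  unfold elift
  rw [dif_pos (⟨a, rfl⟩ : ∃ b, e b = e a)]
  congr 1
  exact e.injective (Classical.choose_spec (⟨a, rfl⟩ : ∃ b, e b = e a))

lemma elift_nmem (e : A ↪ S) {α : Type*} (f : A → α) (d : α) (s : S)
    (hs : ¬ ∃ a, e a = s) : elift e f d s = d := by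
  unfold elift
  rw [dif_neg hs]

/-- the deficit set -/
def Dset (u : A → Bool → ℝ) (V : ℝ × ℝ → ℝ) : Set ℝ :=
  {x | ∃ (n : ℕ) (μ : Fin n → ℝ) (q : Fin n → ℝ × ℝ),
    (∀ i, 0 ≤ μ i) ∧ (∑ i, μ i = 1) ∧ (∀ i, q i ∈ Wset u) ∧
    x = ∑ i, μ i * V (q i) - V (∑ i, μ i * (q i).1, ∑ i, μ i * (q i).2)}

lemma Dset_zero_mem (u : A → Bool → ℝ) (V : ℝ × ℝ → ℝ) : (0 : ℝ) ∈ Dset u V := by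
  refine ⟨1, fun _ => 1, fun _ => ((0 : ℝ), mFun u 0), fun _ => zero_le_one, by simp,
    fun _ => base_mem u, ?_⟩
  simp

lemma deficit_mem (u : A → Bool → ℝ) (V : ℝ × ℝ → ℝ) (μ : ι → ℝ) (q : ι → ℝ × ℝ)
    (hμ : ∀ i, 0 ≤ μ i) (h1 : ∑ i, μ i = 1) (hq : ∀ i, q i ∈ Wset u) :
    (∑ i, μ i * V (q i) - V (∑ i, μ i * (q i).1, ∑ i, μ i * (q i).2)) ∈ Dset u V := by
  set e := (Fintype.equivFin ι)
  refine ⟨Fintype.card ι, fun j => μ (e.symm j), fun j => q (e.symm j),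
    fun j => hμ _, ?_, fun j => hq _, ?_⟩
  · rw [Equiv.sum_comp e.symm μ]; exact h1
  · rw [Equiv.sum_comp e.symm (fun i => μ i * V (q i)),
      Equiv.sum_comp e.symm (fun i => μ i * (q i).1),
      Equiv.sum_comp e.symm (fun i => μ i * (q i).2)]

lemma Dset_bddAbove (u : A → Bool → ℝ) (V : ℝ × ℝ → ℝ) {C : ℝ}
    (hC : ∀ pw ∈ Wset u, |V pw| ≤ C) : BddAbove (Dset u V) := by
  refine ⟨2 * C, ?_⟩
  rintro x ⟨n, μ, q, hμ, h1, hq, rfl⟩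
  have hbar := W_avg u μ q hμ h1 hq
  have h2 : ∑ i, μ i * V (q i) ≤ C := by
    calc ∑ i, μ i * V (q i) ≤ ∑ i, μ i * C := by
          apply Finset.sum_le_sum
          intro i _
          exact mul_le_mul_of_nonneg_left ((abs_le.mp (hC _ (hq i))).2) (hμ i)
      _ = C := by rw [← Finset.sum_mul, h1, one_mul]
  have h3 : -C ≤ V (∑ i, μ i * (q i).1, ∑ i, μ i * (q i).2) :=
    (abs_le.mp (hC _ hbar)).1
  linarith

lemma euP_abs_le (v : A → Bool → ℝ) (a : A) {p : ℝ} (h0 : 0 ≤ p) (h1 : p ≤ 1) :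
    |euP v a p| ≤ |v a false| + |v a true| := by
  unfold euP
  calc |(1 - p) * v a false + p * v a true| ≤ |(1 - p) * v a false| + |p * v a true| :=
        abs_add_le _ _
    _ = (1 - p) * |v a false| + p * |v a true| := by
        rw [abs_mul, abs_mul, abs_of_nonneg (by linarith), abs_of_nonneg h0]
    _ ≤ 1 * |v a false| + 1 * |v a true| := by
        have := abs_nonneg (v a false); have := abs_nonneg (v a true)
        apply add_le_add <;> apply mul_le_mul_of_nonneg_right <;> first | linarith | assumption
    _ = |v a false| + |v a true| := by ring

/-- uniform bound for `euP v` at beliefs in `[0,1]` -/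
def vBound (v : A → Bool → ℝ) : ℝ :=
  Finset.univ.sup' Finset.univ_nonempty (fun a => |v a false| + |v a true|)

lemma euP_le_vBound (v : A → Bool → ℝ) (a : A) {p : ℝ} (h0 : 0 ≤ p) (h1 : p ≤ 1) :
    |euP v a p| ≤ vBound v :=
  le_trans (euP_abs_le v a h0 h1) (Finset.le_sup' (fun a => |v a false| + |v a true|)
    (Finset.mem_univ a))

lemma famPayoff_le (u v : A → Bool → ℝ) {δ : ℝ} (V : ℝ × ℝ → ℝ) {C : ℝ}
    (hδ0 : 0 ≤ δ) (hδ1 : δ ≤ 1) (hC : ∀ pw ∈ Wset u, |V pw| ≤ C)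
    (f : Fam A ι) (hprob : ∀ s, f.prob s ∈ Set.Icc (0:ℝ) 1)
    (hW : ∀ s, (f.belief s, f.promise s) ∈ Wset u) (hsum : ∑ s, f.prob s = 1) :
    famPayoff v δ V f ≤ (1 - δ) * vBound v + δ * C := by
  unfold famPayoff
  calc ∑ s, f.prob s * ((1 - δ) * euP v (f.act s) (f.belief s) + δ * V (f.belief s, f.promise s))
      ≤ ∑ s, f.prob s * ((1 - δ) * vBound v + δ * C) := by
        apply Finset.sum_le_sum
        intro s _
        apply mul_le_mul_of_nonneg_left _ (hprob s).1
        have h1 : euP v (f.act s) (f.belief s) ≤ vBound v :=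
          le_trans (le_abs_self _) (euP_le_vBound v _ ((hW s).1.1) ((hW s).1.2))
        have h2 : V (f.belief s, f.promise s) ≤ C := (abs_le.mp (hC _ (hW s))).2
        have g1 : (1 - δ) * euP v (f.act s) (f.belief s) ≤ (1 - δ) * vBound v :=
          mul_le_mul_of_nonneg_left h1 (by linarith)
        have g2 : δ * V (f.belief s, f.promise s) ≤ δ * C :=
          mul_le_mul_of_nonneg_left h2 hδ0
        linarith
    _ = (1 - δ) * vBound v + δ * C := by rw [← Finset.sum_mul, hsum, one_mul]

lemma exists_feasible (u : A → Bool → ℝ) (δ : ℝ) (hS2 : 2 ≤ Fintype.card S)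
    {pw : ℝ × ℝ} (hpw : pw ∈ Wset u) : ∃ f : Fam A S, Feasible u δ pw f := by
  classical
  obtain ⟨s0, s1, hne⟩ := Fintype.exists_pair_of_one_lt_card (α := S) (by omega)
  obtain ⟨b0, hb0⟩ := exists_argmax u 0
  obtain ⟨b1, hb1⟩ := exists_argmax u 1
  obtain ⟨⟨hp0, hp1⟩, hw1, hw2⟩ := hpw
  set p := pw.1
  refine ⟨⟨fun s => if s = s1 then p else if s = s0 then 1 - p else 0,
    fun s => if s = s1 then 1 else 0,
    fun s => if s = s1 then mFun u 1 else mFun u 0,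
    fun s => if s = s1 then b1 else b0⟩, ?_, ?_, ?_, ?_, ?_, ?_⟩
  · intro s
    dsimp only
    split_ifs <;> constructor <;> linarith
  · intro s
    dsimp only
    split_ifs
    · exact one_mem u
    · exact base_mem u
  · intro s
    dsimp only
    split_ifs
    · rw [hb1]; have : (1 - δ) * mFun u 1 + δ * mFun u 1 = mFun u 1 := by ring
      linarith
    · rw [hb0]; have : (1 - δ) * mFun u 0 + δ * mFun u 0 = mFun u 0 := by ring
      linarith
  · dsimp only
    have key : ∀ s : S, (if s = s1 then p else if s = s0 then 1 - p else 0) *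
        ((1 - δ) * euP u (if s = s1 then b1 else b0) (if s = s1 then (1:ℝ) else 0)
          + δ * (if s = s1 then mFun u 1 else mFun u 0))
        = (if s = s1 then p * mFun u 1 else 0) + (if s = s0 then (1 - p) * mFun u 0 else 0) := by
      intro s
      by_cases h1 : s = s1 <;> by_cases h0 : s = s0
      · exact absurd (h0.symm.trans h1) hne
      · simp only [if_pos h1, if_neg h0]; rw [hb1]; ring
      · simp only [if_neg h1, if_pos h0]; rw [hb0]; ring
      · simp only [if_neg h1, if_neg h0]; rw [hb0]; ring
    rw [Finset.sum_congr rfl (fun s _ => key s), Finset.sum_add_distrib,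
      Finset.sum_ite_eq' Finset.univ s1, Finset.sum_ite_eq' Finset.univ s0]
    simp only [Finset.mem_univ, if_pos]
    have : p * mFun u 1 + (1 - p) * mFun u 0 = MFun u p := by
      rw [mFun_zero, mFun_one]; unfold MFun; ring
    linarith
  · dsimp only
    have key : ∀ s : S, (if s = s1 then p else if s = s0 then 1 - p else 0) *
        (if s = s1 then (1:ℝ) else 0) = if s = s1 then p else 0 := by
      intro s; split_ifs <;> ring
    rw [Finset.sum_congr rfl (fun s _ => key s), Finset.sum_ite_eq' Finset.univ s1]
    simp
    rfl
  · dsimp only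
    have key : ∀ s : S, (if s = s1 then p else if s = s0 then 1 - p else 0)
        = (if s = s1 then p else 0) + (if s = s0 then 1 - p else 0) := by
      intro s
      by_cases h1 : s = s1 <;> by_cases h0 : s = s0
      · exact absurd (h0.symm.trans h1) hne
      all_goals simp [h1, h0, hne, Ne.symm hne]
    rw [Finset.sum_congr rfl (fun s _ => key s), Finset.sum_add_distrib,
      Finset.sum_ite_eq' Finset.univ s1, Finset.sum_ite_eq' Finset.univ s0]
    simp

lemma compress (u v : A → Bool → ℝ) {δ : ℝ} (V : ℝ × ℝ → ℝ) (hδ0 : 0 ≤ δ)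
    (e : A ↪ S) (D' : ℝ)
    (Hd : ∀ (μ : ι → ℝ) (q : ι → ℝ × ℝ), (∀ i, 0 ≤ μ i) → (∑ i, μ i = 1) →
      (∀ i, q i ∈ Wset u) →
      ∑ i, μ i * V (q i) - V (∑ i, μ i * (q i).1, ∑ i, μ i * (q i).2) ≤ D')
    (pw : ℝ × ℝ) (g : Fam A ι) (hg : Feasible u δ pw g) :
    ∃ h : Fam A S, Feasible u δ pw h ∧
      famPayoff v δ V h ≥ famPayoff v δ V g - δ * D' ∧
      ∀ s, 0 < h.prob s → e (h.act s) = s := by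
  classical
  obtain ⟨hprob, hWm, hIC, hPK, hBel, hTot⟩ := hg
  obtain ⟨adef, hadef⟩ := exists_argmax u 0
  set m0 := mFun u 0 with hm0def
  set L : A → ℝ := fun a => ∑ i, if g.act i = a then g.prob i else 0 with hLdef
  set P : A → ℝ := fun a => ∑ i, if g.act i = a then g.prob i * g.belief i else 0 with hPdef
  set Wp : A → ℝ := fun a => ∑ i, if g.act i = a then g.prob i * g.promise i else 0 with hWpdef
  set cB : A → ℝ := fun a => if 0 < L a then (L a)⁻¹ * P a else 0 with hcBdef
  set cW : A → ℝ := fun a => if 0 < L a then (L a)⁻¹ * Wp a else m0 with hcWdef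
  set cA : A → A := fun a => if 0 < L a then a else adef with hcAdef
  have hLapp : ∀ b, L b = ∑ i, if g.act i = b then g.prob i else 0 := fun b => by rw [hLdef]
  have hPapp : ∀ b, P b = ∑ i, if g.act i = b then g.prob i * g.belief i else 0 := fun b => by
    rw [hPdef]
  have hWpapp : ∀ b, Wp b = ∑ i, if g.act i = b then g.prob i * g.promise i else 0 := fun b => by
    rw [hWpdef]
  have hcBapp : ∀ b, cB b = if 0 < L b then (L b)⁻¹ * P b else 0 := fun b => by rw [hcBdef]
  have hcWapp : ∀ b, cW b = if 0 < L b then (L b)⁻¹ * Wp b else m0 := fun b => by rw [hcWdef]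
  have hcAapp : ∀ b, cA b = if 0 < L b then b else adef := fun b => by rw [hcAdef]
  have hLnn : ∀ a, 0 ≤ L a := by
    intro a
    rw [hLapp a]
    apply Finset.sum_nonneg
    intro i _
    split
    · exact (hprob i).1
    · exact le_rfl
  have swap : ∀ φ : ι → ℝ, (∑ a, ∑ i, if g.act i = a then φ i else 0) = ∑ i, φ i := by
    intro φ
    rw [Finset.sum_comm]
    apply Finset.sum_congr rfl
    intro i _
    rw [Finset.sum_ite_eq]
    simp
  have hL1 : ∑ a, L a = 1 := by
    rw [Finset.sum_congr rfl (fun b _ => hLapp b), swap]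
    exact hTot
  have hLle1 : ∀ a, L a ≤ 1 := by
    intro a
    rw [hLapp a, ← hTot]
    apply Finset.sum_le_sum
    intro i _
    split
    · exact le_rfl
    · exact (hprob i).1
  have hzero : ∀ a, ¬ 0 < L a → ∀ i, g.act i = a → g.prob i = 0 := by
    intro a hLa i hia
    have hLa0 : (∑ i, if g.act i = a then g.prob i else 0) = 0 := by
      rw [← hLapp a]
      exact le_antisymm (not_lt.mp hLa) (hLnn a)
    have := (Finset.sum_eq_zero_iff_of_nonneg (fun i _ => by
      split
      · exact (hprob i).1
      · exact le_rfl)).mp hLa0 i (Finset.mem_univ i)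
    rwa [if_pos hia] at this
  have hpadIC : (1 - δ) * euP u adef 0 + δ * m0 ≥ m0 := by
    rw [hadef]
    have : (1 - δ) * m0 + δ * m0 = m0 := by ring
    linarith
  -- per-action facts
  have main : ∀ a : A,
      ((cB a, cW a) ∈ Wset u) ∧
      ((1 - δ) * euP u (cA a) (cB a) + δ * cW a ≥ mFun u (cB a)) ∧
      (L a * ((1 - δ) * euP u (cA a) (cB a) + δ * cW a)
        = ∑ i, if g.act i = a then
            g.prob i * ((1 - δ) * euP u (g.act i) (g.belief i) + δ * g.promise i) else 0) ∧
      (L a * cB a = P a) ∧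
      (L a * ((1 - δ) * euP v (cA a) (cB a) + δ * V (cB a, cW a))
        ≥ (∑ i, if g.act i = a then
            g.prob i * ((1 - δ) * euP v (g.act i) (g.belief i)
              + δ * V (g.belief i, g.promise i)) else 0) - δ * (L a * D')) := by
    intro a
    by_cases hL : 0 < L a
    · -- positive-mass group
      set μ : ι → ℝ := fun i => (L a)⁻¹ * (if g.act i = a then g.prob i else 0) with hμdef
      have hμapp : ∀ i, μ i = (L a)⁻¹ * (if g.act i = a then g.prob i else 0) := fun i => by
        rw [hμdef]
      have hμnn : ∀ i, 0 ≤ μ i := by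
        intro i
        rw [hμapp i]
        apply mul_nonneg (inv_nonneg.mpr (hLnn a))
        split
        · exact (hprob i).1
        · exact le_rfl
      have hμ1 : ∑ i, μ i = 1 := by
        rw [Finset.sum_congr rfl (fun i _ => hμapp i), ← Finset.mul_sum, ← hLapp a]
        exact inv_mul_cancel₀ hL.ne'
      have M1 : ∀ x : ι → ℝ, ∑ i, μ i * x i
          = (L a)⁻¹ * ∑ i, if g.act i = a then g.prob i * x i else 0 := by
        intro x
        rw [Finset.mul_sum]
        apply Finset.sum_congr rfl
        intro i _
        rw [hμapp i]
        split
        · ring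
        · ring
      have hμzero : ∀ i, g.act i ≠ a → μ i = 0 := by
        intro i hia
        rw [hμapp i, if_neg hia, mul_zero]
      have hcB : cB a = ∑ i, μ i * g.belief i := by
        rw [hcBapp a, if_pos hL, M1 g.belief, hPapp a]
      have hcW : cW a = ∑ i, μ i * g.promise i := by
        rw [hcWapp a, if_pos hL, M1 g.promise, hWpapp a]
      have hcA : cA a = a := by rw [hcAapp a, if_pos hL]
      have hWmem : (cB a, cW a) ∈ Wset u := by
        rw [hcB, hcW]
        exact W_avg u μ (fun i => (g.belief i, g.promise i)) hμnn hμ1 (fun i => hWm i)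
      have e1 : ∀ (φ : A → Bool → ℝ) (r : ι → ℝ),
          (1 - δ) * euP φ a (cB a) + δ * ∑ i, μ i * r i
            = ∑ i, μ i * ((1 - δ) * euP φ a (g.belief i) + δ * r i) := by
        intro φ r
        rw [hcB, ← euP_sum φ a μ _ hμ1, Finset.mul_sum, Finset.mul_sum,
          ← Finset.sum_add_distrib]
        apply Finset.sum_congr rfl
        intro i _
        ring
      have hICa : (1 - δ) * euP u (cA a) (cB a) + δ * cW a ≥ mFun u (cB a) := by
        rw [hcA, hcW, e1 u g.promise]
        have step : ∑ i, μ i * mFun u (g.belief i)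
            ≤ ∑ i, μ i * ((1 - δ) * euP u a (g.belief i) + δ * g.promise i) := by
          apply Finset.sum_le_sum
          intro i _
          by_cases hia : g.act i = a
          · apply mul_le_mul_of_nonneg_left _ (hμnn i)
            have := hIC i
            rwa [hia] at this
          · rw [hμzero i hia, zero_mul, zero_mul]
        have jen : mFun u (cB a) ≤ ∑ i, μ i * mFun u (g.belief i) := by
          rw [hcB]
          exact mFun_jensen u μ _ hμnn hμ1
        exact le_trans jen step
      have cancel : ∀ x : ℝ, L a * ((L a)⁻¹ * x) = x := by
        intro x
        rw [← mul_assoc, mul_inv_cancel₀ hL.ne', one_mul]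
      have htot : L a * ((1 - δ) * euP u (cA a) (cB a) + δ * cW a)
          = ∑ i, if g.act i = a then
              g.prob i * ((1 - δ) * euP u (g.act i) (g.belief i) + δ * g.promise i) else 0 := by
        rw [hcA, hcW, e1 u g.promise, M1, cancel]
        apply Finset.sum_congr rfl
        intro i _
        by_cases hia : g.act i = a
        · rw [if_pos hia, if_pos hia, hia]
        · rw [if_neg hia, if_neg hia]
      have hLcB : L a * cB a = P a := by
        rw [hcBapp a, if_pos hL, cancel]
      have hpay : L a * ((1 - δ) * euP v (cA a) (cB a) + δ * V (cB a, cW a))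
          ≥ (∑ i, if g.act i = a then
              g.prob i * ((1 - δ) * euP v (g.act i) (g.belief i)
                + δ * V (g.belief i, g.promise i)) else 0) - δ * (L a * D') := by
        have hVge : V (cB a, cW a) ≥ (∑ i, μ i * V (g.belief i, g.promise i)) - D' := by
          have := Hd μ (fun i => (g.belief i, g.promise i)) hμnn hμ1 (fun i => hWm i)
          have heq : ((∑ i, μ i * g.belief i), (∑ i, μ i * g.promise i)) = (cB a, cW a) := by
            rw [hcB, hcW]
          dsimp only at this
          rw [heq] at this
          linarith
        have expand : L a * ((1 - δ) * euP v (cA a) (cB a)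
              + δ * ∑ i, μ i * V (g.belief i, g.promise i))
            = ∑ i, if g.act i = a then
              g.prob i * ((1 - δ) * euP v (g.act i) (g.belief i)
                + δ * V (g.belief i, g.promise i)) else 0 := by
          rw [hcA, e1 v (fun i => V (g.belief i, g.promise i)), M1, cancel]
          apply Finset.sum_congr rfl
          intro i _
          by_cases hia : g.act i = a
          · rw [if_pos hia, if_pos hia, hia]
          · rw [if_neg hia, if_neg hia]
        have base : L a * ((1 - δ) * euP v (cA a) (cB a) + δ * V (cB a, cW a))
            ≥ L a * ((1 - δ) * euP v (cA a) (cB a)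
                + δ * ∑ i, μ i * V (g.belief i, g.promise i)) - δ * (L a * D') := by
          have h1 : δ * V (cB a, cW a)
              ≥ δ * ((∑ i, μ i * V (g.belief i, g.promise i)) - D') :=
            mul_le_mul_of_nonneg_left hVge hδ0
          nlinarith [hLnn a, hL]
        rw [expand] at base
        exact base
      exact ⟨hWmem, hICa, htot, hLcB, hpay⟩
    · -- zero-mass group
      have hLa0 : L a = 0 := le_antisymm (not_lt.mp hL) (hLnn a)
      have hsz : ∀ x : ι → ℝ, (∑ i, if g.act i = a then g.prob i * x i else 0) = 0 := by
        intro x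
        apply Finset.sum_eq_zero
        intro i _
        by_cases hia : g.act i = a
        · rw [if_pos hia, hzero a hL i hia, zero_mul]
        · rw [if_neg hia]
      have hcB : cB a = 0 := by rw [hcBapp a, if_neg hL]
      have hcW : cW a = m0 := by rw [hcWapp a, if_neg hL]
      have hcA : cA a = adef := by rw [hcAapp a, if_neg hL]
      refine ⟨?_, ?_, ?_, ?_, ?_⟩
      · rw [hcB, hcW, hm0def]; exact base_mem u
      · rw [hcB, hcW, hcA]
        exact hpadIC
      · rw [hLa0, zero_mul, hsz]
      · rw [hLa0, zero_mul, hPapp a]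
        exact (hsz g.belief).symm
      · rw [hLa0, zero_mul, hsz]
        simp
  -- assemble the compressed family on S
  refine ⟨⟨elift e L 0, elift e cB 0, elift e cW m0, elift e cA adef⟩,
    ⟨?_, ?_, ?_, ?_, ?_, ?_⟩, ?_, ?_⟩
  · intro s
    dsimp only
    by_cases hs : ∃ a, e a = s
    · obtain ⟨a, rfl⟩ := hs
      rw [elift_apply]
      exact ⟨hLnn a, hLle1 a⟩
    · rw [elift_nmem e _ _ _ hs]
      exact ⟨le_rfl, zero_le_one⟩
  · intro s
    dsimp only
    by_cases hs : ∃ a, e a = s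
    · obtain ⟨a, rfl⟩ := hs
      rw [elift_apply, elift_apply]
      exact (main a).1
    · rw [elift_nmem e _ _ _ hs, elift_nmem e _ _ _ hs, hm0def]
      exact base_mem u
  · intro s
    dsimp only
    by_cases hs : ∃ a, e a = s
    · obtain ⟨a, rfl⟩ := hs
      rw [elift_apply, elift_apply, elift_apply]
      exact (main a).2.1
    · rw [elift_nmem e _ _ _ hs, elift_nmem e _ _ _ hs, elift_nmem e _ _ _ hs]
      exact hpadIC
  · dsimp only
    rw [sum_elift_eq e (F := fun s => elift e L 0 s *
        ((1 - δ) * euP u (elift e cA adef s) (elift e cB 0 s) + δ * elift e cW m0 s))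
      (by
        intro s hs
        rw [elift_nmem e _ _ _ hs, zero_mul])]
    have : ∀ a : A, elift e L 0 (e a) *
        ((1 - δ) * euP u (elift e cA adef (e a)) (elift e cB 0 (e a))
          + δ * elift e cW m0 (e a))
        = ∑ i, if g.act i = a then
            g.prob i * ((1 - δ) * euP u (g.act i) (g.belief i) + δ * g.promise i) else 0 := by
      intro a
      rw [elift_apply, elift_apply, elift_apply, elift_apply]
      exact (main a).2.2.1
    rw [Finset.sum_congr rfl (fun a _ => this a), swap]
    exact hPK
  · dsimp only
    rw [sum_elift_eq e (F := fun s => elift e L 0 s * elift e cB 0 s)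
      (by
        intro s hs
        rw [elift_nmem e _ _ _ hs, zero_mul])]
    have : ∀ a : A, elift e L 0 (e a) * elift e cB 0 (e a)
        = ∑ i, if g.act i = a then g.prob i * g.belief i else 0 := by
      intro a
      rw [elift_apply, elift_apply, (main a).2.2.2.1, hPdef]
    rw [Finset.sum_congr rfl (fun a _ => this a), swap]
    exact hBel
  · dsimp only
    rw [sum_elift_eq e (F := fun s => elift e L 0 s) (fun s hs => elift_nmem e _ _ _ hs)]
    have : ∀ a : A, elift e L 0 (e a) = L a := fun a => elift_apply e _ _ a
    rw [Finset.sum_congr rfl (fun a _ => this a)]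
    exact hL1
  · unfold famPayoff
    dsimp only
    rw [sum_elift_eq e (F := fun s => elift e L 0 s *
        ((1 - δ) * euP v (elift e cA adef s) (elift e cB 0 s)
          + δ * V (elift e cB 0 s, elift e cW m0 s)))
      (by
        intro s hs
        rw [elift_nmem e _ _ _ hs, zero_mul])]
    have step : ∀ a : A, elift e L 0 (e a) *
        ((1 - δ) * euP v (elift e cA adef (e a)) (elift e cB 0 (e a))
          + δ * V (elift e cB 0 (e a), elift e cW m0 (e a)))
        ≥ (∑ i, if g.act i = a then
            g.prob i * ((1 - δ) * euP v (g.act i) (g.belief i)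
              + δ * V (g.belief i, g.promise i)) else 0) - δ * (L a * D') := by
      intro a
      rw [elift_apply, elift_apply, elift_apply, elift_apply]
      exact (main a).2.2.2.2
    calc ∑ a, elift e L 0 (e a) *
          ((1 - δ) * euP v (elift e cA adef (e a)) (elift e cB 0 (e a))
            + δ * V (elift e cB 0 (e a), elift e cW m0 (e a)))
        ≥ ∑ a, ((∑ i, if g.act i = a then
            g.prob i * ((1 - δ) * euP v (g.act i) (g.belief i)
              + δ * V (g.belief i, g.promise i)) else 0) - δ * (L a * D')) :=
          Finset.sum_le_sum (fun a _ => step a)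
      _ = (∑ i, g.prob i * ((1 - δ) * euP v (g.act i) (g.belief i)
              + δ * V (g.belief i, g.promise i))) - δ * D' := by
          rw [Finset.sum_sub_distrib, swap]
          congr 1
          have : ∀ a : A, δ * (L a * D') = (δ * D') * L a := by intro a; ring
          rw [Finset.sum_congr rfl (fun a _ => this a), ← Finset.mul_sum, hL1]
          ring
      _ = famPayoff v δ V g - δ * D' := rfl
  · intro s hs
    dsimp only at hs ⊢
    by_cases hrange : ∃ a, e a = s
    · obtain ⟨a, rfl⟩ := hrange
      rw [elift_apply] at hs
      rw [elift_apply, hcAapp a, if_pos hs]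
    · rw [elift_nmem e _ _ _ hrange] at hs
      exact absurd hs (lt_irrefl 0)

end OFS

/-- from any optimal family one can construct another optimal family in
which at most one signal with positive probability recommends `a*`. -/
theorem optimal_family_single_astar_signal
    {A S : Type*} [Fintype A] [Nonempty A] [Fintype S]
    (u v : A → Bool → ℝ) (δ : ℝ) (astar : A)
    (hδ : δ ∈ Set.Ioo (0 : ℝ) 1)
    (hS2 : 2 ≤ Fintype.card S) (hAS : Fintype.card A ≤ Fintype.card S)
    (hv0 : 0 < v astar false) (hv1 : 0 < v astar true)
    (hvz : ∀ a : A, a ≠ astar → v a false = 0 ∧ v a true = 0)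
    (Vstar : ℝ × ℝ → ℝ) (hVb : BddOnW u Vstar)
    (hVfix : ∀ pw ∈ Wset u, bellman (S := S) u v δ Vstar pw = Vstar pw)
    (pw : ℝ × ℝ) (hpw : pw ∈ Wset u) (f' : Fam A S)
    (hfeas : Feasible u δ pw f')
    (hopt : famPayoff v δ Vstar f' = bellman (S := S) u v δ Vstar pw) :
    ∃ f : Fam A S, Feasible u δ pw f ∧
      famPayoff v δ Vstar f = bellman (S := S) u v δ Vstar pw ∧
      ∀ s s' : S, (0 < f.prob s ∧ f.act s = astar) → (0 < f.prob s' ∧ f.act s' = astar) →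
        s = s' := by
  classical
  obtain ⟨hδ0, hδ1⟩ := hδ
  obtain ⟨C, hC⟩ := hVb
  obtain ⟨e⟩ : Nonempty (A ↪ S) := Function.Embedding.nonempty_iff_card_le.2 hAS
  have hbell : ∀ q : ℝ × ℝ, bellman (S := S) u v δ Vstar q
      = sSup {x | ∃ f : Fam A S, Feasible u δ q f ∧ x = famPayoff v δ Vstar f} :=
    fun _ => rfl
  have hne : ∀ q ∈ Wset u,
      {x | ∃ f : Fam A S, Feasible u δ q f ∧ x = famPayoff v δ Vstar f}.Nonempty := by
    intro q hq
    obtain ⟨f, hf⟩ := OFS.exists_feasible u δ hS2 hq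
    exact ⟨famPayoff v δ Vstar f, f, hf, rfl⟩
  have hbdd : ∀ q : ℝ × ℝ,
      BddAbove {x | ∃ f : Fam A S, Feasible u δ q f ∧ x = famPayoff v δ Vstar f} := by
    intro q
    refine ⟨(1 - δ) * OFS.vBound v + δ * C, ?_⟩
    rintro x ⟨f, hf, rfl⟩
    exact OFS.famPayoff_le u v Vstar hδ0.le hδ1.le hC f hf.1 hf.2.1 hf.2.2.2.2.2
  have hle_bell : ∀ (q : ℝ × ℝ) (f : Fam A S), Feasible u δ q f →
      famPayoff v δ Vstar f ≤ bellman (S := S) u v δ Vstar q := by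
    intro q f hf
    rw [hbell]
    exact le_csSup (hbdd q) ⟨f, hf, rfl⟩
  have hDbddAbove : BddAbove (OFS.Dset u Vstar) := OFS.Dset_bddAbove u Vstar hC
  set D := sSup (OFS.Dset u Vstar) with hDdef
  have hDnn : 0 ≤ D := le_csSup hDbddAbove (OFS.Dset_zero_mem u Vstar)
  have hDne : (OFS.Dset u Vstar).Nonempty := ⟨0, OFS.Dset_zero_mem u Vstar⟩
  have key : ∀ ε > (0:ℝ), D ≤ δ * D + ε := by
    intro ε hε
    apply csSup_le hDne
    rintro x ⟨n, μ, q, hμ, h1, hq, rfl⟩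
    have hμle1 : ∀ i, μ i ≤ 1 := by
      intro i
      rw [← h1]
      exact Finset.single_le_sum (fun j _ => hμ j) (Finset.mem_univ i)
    have choice : ∀ i : Fin n, ∃ f : Fam A S, Feasible u δ (q i) f ∧
        Vstar (q i) - ε ≤ famPayoff v δ Vstar f := by
      intro i
      have hval : Vstar (q i) - ε < sSup {x | ∃ f : Fam A S, Feasible u δ (q i) f ∧
          x = famPayoff v δ Vstar f} := by
        rw [← hbell, hVfix _ (hq i)]
        linarith
      obtain ⟨x, ⟨f, hf, rfl⟩, hx⟩ := exists_lt_of_lt_csSup (hne _ (hq i)) hval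
      exact ⟨f, hf, hx.le⟩
    choose F hFfeas hFval using choice
    set g : Fam A (Fin n × S) :=
      ⟨fun is => μ is.1 * (F is.1).prob is.2,
       fun is => (F is.1).belief is.2,
       fun is => (F is.1).promise is.2,
       fun is => (F is.1).act is.2⟩ with hgdef
    set qbar : ℝ × ℝ := (∑ i, μ i * (q i).1, ∑ i, μ i * (q i).2) with hqbardef
    have hqbarW : qbar ∈ Wset u := OFS.W_avg u μ q hμ h1 hq
    have hgfeas : Feasible u δ qbar g := by
      refine ⟨?_, ?_, ?_, ?_, ?_, ?_⟩
      · rintro ⟨i, s⟩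
        refine ⟨mul_nonneg (hμ i) ((hFfeas i).1 s).1, ?_⟩
        exact mul_le_one₀ (hμle1 i) ((hFfeas i).1 s).1 ((hFfeas i).1 s).2
      · rintro ⟨i, s⟩
        exact (hFfeas i).2.1 s
      · rintro ⟨i, s⟩
        exact (hFfeas i).2.2.1 s
      · show (∑ is : Fin n × S, (μ is.1 * (F is.1).prob is.2) *
            ((1 - δ) * euP u ((F is.1).act is.2) ((F is.1).belief is.2)
              + δ * (F is.1).promise is.2)) ≥ qbar.2
        rw [Fintype.sum_prod_type]
        have step : ∀ i : Fin n, (∑ s, (μ i * (F i).prob s) *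
            ((1 - δ) * euP u ((F i).act s) ((F i).belief s) + δ * (F i).promise s))
            = μ i * ∑ s, (F i).prob s *
              ((1 - δ) * euP u ((F i).act s) ((F i).belief s) + δ * (F i).promise s) := by
          intro i
          rw [Finset.mul_sum]
          apply Finset.sum_congr rfl
          intro s _
          ring
        rw [Finset.sum_congr rfl (fun i _ => step i)]
        calc ∑ i, μ i * ∑ s, (F i).prob s *
              ((1 - δ) * euP u ((F i).act s) ((F i).belief s) + δ * (F i).promise s)
            ≥ ∑ i, μ i * (q i).2 :=
              Finset.sum_le_sum fun i _ =>
                mul_le_mul_of_nonneg_left ((hFfeas i).2.2.2.1) (hμ i)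
          _ = qbar.2 := rfl
      · show (∑ is : Fin n × S, (μ is.1 * (F is.1).prob is.2) * (F is.1).belief is.2) = qbar.1
        rw [Fintype.sum_prod_type]
        have step : ∀ i : Fin n, (∑ s, (μ i * (F i).prob s) * (F i).belief s)
            = μ i * ∑ s, (F i).prob s * (F i).belief s := by
          intro i
          rw [Finset.mul_sum]
          apply Finset.sum_congr rfl
          intro s _
          ring
        rw [Finset.sum_congr rfl (fun i _ => step i)]
        have : ∀ i : Fin n, μ i * (∑ s, (F i).prob s * (F i).belief s) = μ i * (q i).1 :=
          fun i => by rw [(hFfeas i).2.2.2.2.1]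
        rw [Finset.sum_congr rfl (fun i _ => this i)]
      · show (∑ is : Fin n × S, μ is.1 * (F is.1).prob is.2) = 1
        rw [Fintype.sum_prod_type]
        have : ∀ i : Fin n, (∑ s, μ i * (F i).prob s) = μ i := by
          intro i
          rw [← Finset.mul_sum, (hFfeas i).2.2.2.2.2, mul_one]
        rw [Finset.sum_congr rfl (fun i _ => this i)]
        exact h1
    have hgpay : famPayoff v δ Vstar g = ∑ i, μ i * famPayoff v δ Vstar (F i) := by
      unfold famPayoff
      show (∑ is : Fin n × S, (μ is.1 * (F is.1).prob is.2) *
          ((1 - δ) * euP v ((F is.1).act is.2) ((F is.1).belief is.2)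
            + δ * Vstar ((F is.1).belief is.2, (F is.1).promise is.2))) = _
      rw [Fintype.sum_prod_type]
      apply Finset.sum_congr rfl
      intro i _
      rw [Finset.mul_sum]
      apply Finset.sum_congr rfl
      intro s _
      ring
    obtain ⟨h, hhfeas, hhpay, _⟩ := OFS.compress (ι := Fin n × S) u v Vstar hδ0.le e D
      (fun μ' q' a b c => le_csSup hDbddAbove (OFS.deficit_mem u Vstar μ' q' a b c)) qbar g hgfeas
    have hVbar : famPayoff v δ Vstar h ≤ Vstar qbar := by
      rw [← hVfix _ hqbarW]
      exact hle_bell qbar h hhfeas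
    have hpayg : famPayoff v δ Vstar g ≥ ∑ i, μ i * Vstar (q i) - ε := by
      rw [hgpay]
      have step : ∀ i : Fin n, μ i * famPayoff v δ Vstar (F i) ≥ μ i * (Vstar (q i) - ε) :=
        fun i => mul_le_mul_of_nonneg_left (hFval i) (hμ i)
      calc ∑ i, μ i * famPayoff v δ Vstar (F i) ≥ ∑ i, μ i * (Vstar (q i) - ε) :=
            Finset.sum_le_sum fun i _ => step i
        _ = ∑ i, μ i * Vstar (q i) - ε := by
            have expand : ∀ i : Fin n, μ i * (Vstar (q i) - ε) = μ i * Vstar (q i) - μ i * ε :=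
              fun i => by ring
            rw [Finset.sum_congr rfl (fun i _ => expand i), Finset.sum_sub_distrib,
              ← Finset.sum_mul, h1, one_mul]
    have : Vstar qbar ≥ ∑ i, μ i * Vstar (q i) - ε - δ * D := by
      have := hhpay
      linarith
    show ∑ i, μ i * Vstar (q i) - Vstar qbar ≤ δ * D + ε
    linarith
  have hDle : D ≤ δ * D := le_of_forall_pos_le_add key
  have hD0 : D ≤ 0 := by nlinarith
  obtain ⟨h, hhfeas, hhpay, hhact⟩ := OFS.compress (ι := S) u v Vstar hδ0.le e 0
    (fun μ' q' a b c => le_trans (le_csSup hDbddAbove (OFS.deficit_mem u Vstar μ' q' a b c)) hD0) pw f' hfeas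
  refine ⟨h, hhfeas, ?_, ?_⟩
  · apply le_antisymm (hle_bell pw h hhfeas)
    rw [← hopt]
    have : famPayoff v δ Vstar h ≥ famPayoff v δ Vstar f' - δ * 0 := hhpay
    linarith
  · rintro s s' ⟨hs, hact⟩ ⟨hs', hact'⟩
    have e1 := hhact s hs
    have e2 := hhact s' hs'
    rw [hact] at e1
    rw [hact'] at e2
    rw [← e1, ← e2]
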